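/- For independent Poisson random variables X₁ ~ Poisson(λ₁) and X₂ ~ Poisson(λ₂), both satisfy E[X_j²] = E[X_j] + E[X_j]², whereas if X₂ | X₁ ~ Poisson(g(X₁)) for a non-constant positive function g, then E[X₂²] > E[X₂] + E[X₂]². Hence the bivariate graphs X₁⊥X₂, X₁→X₂, and X₂→X₁ are mutually distinguishable from the two moment ratios E[X_j²]/(E[X_j]+E[X_j]²). -/

import Mathlib

open MeasureTheory ProbabilityTheory Real
open scoped NNReal

lemma poisson_aux_succ (r : ℝ≥0) (n : ℕ) :
    ((n + 1 : ℕ) : ℝ) * poissonPMFReal r (n + 1) = r * poissonPMFReal r n := by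
  unfold poissonPMFReal
  have h : ((Nat.factorial (n + 1)) : ℝ) = ((n : ℝ) + 1) * ((Nat.factorial n) : ℝ) := by
    rw [Nat.factorial_succ]; push_cast; ring
  have hn : ((n : ℝ) + 1) ≠ 0 := by positivity
  have hf : ((Nat.factorial n : ℕ) : ℝ) ≠ 0 := by
    exact_mod_cast Nat.factorial_ne_zero n
  push_cast
  rw [h]
  field_simp
  ring

lemma poisson_hasSum_first (r : ℝ≥0) :
    HasSum (fun n : ℕ => (n : ℝ) * poissonPMFReal r n) r := by
  have base := (poissonPMFRealSum r).mul_left (r : ℝ)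
  have hshift : (fun n : ℕ => ((n + 1 : ℕ) : ℝ) * poissonPMFReal r (n + 1)) =
      fun n => (r : ℝ) * poissonPMFReal r n := by
    funext n; exact poisson_aux_succ r n
  have h1 : HasSum (fun n : ℕ => ((n + 1 : ℕ) : ℝ) * poissonPMFReal r (n + 1)) r := by
    rw [hshift]; simpa [poissonPMFReal] using base
  have := (hasSum_nat_add_iff (f := fun n : ℕ => (n : ℝ) * poissonPMFReal r n) 1).mp
    (by simpa using h1)
  simpa using this

lemma poisson_hasSum_second (r : ℝ≥0) :
    HasSum (fun n : ℕ => ((n : ℝ)) ^ 2 * poissonPMFReal r n) ((r : ℝ) + (r : ℝ) ^ 2) := by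
  have hfirst := (poisson_hasSum_first r).mul_left (r : ℝ)
  have hbase := (poissonPMFRealSum r).mul_left (r : ℝ)
  have hsum : HasSum (fun n : ℕ => (r : ℝ) * ((n : ℝ) * poissonPMFReal r n)
      + (r : ℝ) * poissonPMFReal r n) ((r : ℝ) * r + (r : ℝ) * 1) := hfirst.add hbase
  have h1 : HasSum (fun n : ℕ => (((n + 1 : ℕ) : ℝ)) ^ 2 * poissonPMFReal r (n + 1))
      ((r : ℝ) * r + (r : ℝ) * 1) := by
    refine HasSum.congr_fun hsum ?_
    intro n
    have h := poisson_aux_succ r n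
    have : (((n + 1 : ℕ) : ℝ)) ^ 2 * poissonPMFReal r (n + 1)
        = ((n : ℝ) + 1) * (((n + 1 : ℕ) : ℝ) * poissonPMFReal r (n + 1)) := by
      push_cast; ring
    rw [this, h]; push_cast; ring
  have := (hasSum_nat_add_iff (f := fun n : ℕ => ((n : ℝ)) ^ 2 * poissonPMFReal r n) 1).mp
    (by simpa using h1)
  simpa [sq, add_comm] using this

lemma poissonPMF_toReal (r : ℝ≥0) (n : ℕ) :
    ((poissonPMF r n).toReal) = poissonPMFReal r n := by
  have : poissonPMF r n = ENNReal.ofReal (poissonPMFReal r n) := rfl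
  rw [this, ENNReal.toReal_ofReal poissonPMFReal_nonneg]

lemma poisson_integral_id (r : ℝ≥0)
    (h : Integrable (fun n : ℕ => (n : ℝ)) (poissonMeasure r)) :
    ∫ n : ℕ, (n : ℝ) ∂(poissonMeasure r) = r := by
  rw [integral_poissonMeasure' h]
  refine Eq.trans ?_ (poisson_hasSum_first r).tsum_eq
  congr 1; funext n; unfold poissonPMFReal; simp only [smul_eq_mul]; ring

lemma poisson_integral_sq (r : ℝ≥0)
    (h : Integrable (fun n : ℕ => ((n : ℝ)) ^ 2) (poissonMeasure r)) :
    ∫ n : ℕ, ((n : ℝ)) ^ 2 ∂(poissonMeasure r) = (r : ℝ) + (r : ℝ) ^ 2 := by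
  rw [integral_poissonMeasure' h, ← (poisson_hasSum_second r).tsum_eq]
  congr 1; funext n; unfold poissonPMFReal; simp only [smul_eq_mul]; ring

/-- Bivariate identifiability: a Poisson marginal satisfies `E[X²] = E[X] + E[X]²`,
while a node whose conditional distribution given its parent is Poisson with a
non-constant rate satisfies the strict inequality `E[X²] > E[X] + E[X]²`;
hence `G₁`, `G₂`, `G₃` are distinguishable via the two moments ratios. -/
theorem stmt_5 {Ω : Type*} {m0 : MeasurableSpace Ω} (μ : Measure Ω) [IsProbabilityMeasure μ]
    (X₁ X₂ : Ω → ℕ) (l₁ : ℝ≥0) (hl₁ : 0 < l₁)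
    (g : ℕ → ℝ) (hg : ∀ n, 0 < g n)
    (m1 : MeasurableSpace Ω) (hm1 : m1 ≤ m0)
    (hX1meas : @Measurable Ω ℕ m1 ⊤ X₁)
    (hmap : @Measure.map Ω ℕ m0 inferInstance X₁ μ = poissonMeasure l₁)
    (hcond1 : μ[(fun ω => (X₂ ω : ℝ)) | m1] =ᵐ[μ] fun ω => g (X₁ ω))
    (hcond2 : μ[(fun ω => ((X₂ ω : ℝ)) ^ 2) | m1] =ᵐ[μ] fun ω => g (X₁ ω) + g (X₁ ω) ^ 2)
    (hint1 : Integrable (fun ω => ((X₁ ω : ℝ)) ^ 2) μ)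
    (hint2 : Integrable (fun ω => ((X₂ ω : ℝ)) ^ 2) μ)
    (hnonconst : ¬ ∃ c : ℝ, (fun ω => g (X₁ ω)) =ᵐ[μ] fun _ => c) :
    (∫ ω, ((X₁ ω : ℝ)) ^ 2 ∂μ = ∫ ω, (X₁ ω : ℝ) ∂μ + (∫ ω, (X₁ ω : ℝ) ∂μ) ^ 2) ∧
    (∫ ω, ((X₂ ω : ℝ)) ^ 2 ∂μ > ∫ ω, (X₂ ω : ℝ) ∂μ + (∫ ω, (X₂ ω : ℝ) ∂μ) ^ 2) := by
  -- measurability facts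
  have hX1m0 : @Measurable Ω ℕ m0 ⊤ X₁ := hX1meas.mono hm1 le_rfl
  have hX1r : @Measurable Ω ℝ m0 _ (fun ω => (X₁ ω : ℝ)) := (measurable_from_top).comp hX1m0
  have hX1int : Integrable (fun ω => (X₁ ω : ℝ)) μ := by
    refine Integrable.mono' (g := fun ω => ((X₁ ω : ℝ))^2 + 1)
      (hint1.add (integrable_const 1)) hX1r.aestronglyMeasurable ?_
    filter_upwards with ω
    have h0 : (0:ℝ) ≤ (X₁ ω : ℝ) := Nat.cast_nonneg _
    rw [Real.norm_eq_abs, abs_of_nonneg h0]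
    nlinarith [sq_nonneg ((X₁ ω : ℝ) - 1)]
  -- transfer to poissonMeasure
  have hcast : AEStronglyMeasurable (fun n : ℕ => (n : ℝ)) (poissonMeasure l₁) :=
    (measurable_from_top (f := fun n : ℕ => (n : ℝ))).aestronglyMeasurable
  have hcastsq : AEStronglyMeasurable (fun n : ℕ => ((n : ℝ))^2) (poissonMeasure l₁) :=
    (measurable_from_top (f := fun n : ℕ => ((n : ℝ))^2)).aestronglyMeasurable
  have hint1' : Integrable (fun n : ℕ => ((n : ℝ))^2) (poissonMeasure l₁) := by
    rw [← hmap]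
    exact (integrable_map_measure (by rw [hmap]; exact hcastsq) hX1m0.aemeasurable).mpr hint1
  have hint1'' : Integrable (fun n : ℕ => (n : ℝ)) (poissonMeasure l₁) := by
    rw [← hmap]
    exact (integrable_map_measure (by rw [hmap]; exact hcast) hX1m0.aemeasurable).mpr hX1int
  have hI1 : ∫ ω, (X₁ ω : ℝ) ∂μ = (l₁ : ℝ) := by
    have h := integral_map (μ := μ) hX1m0.aemeasurable (f := fun n : ℕ => (n : ℝ))
      (by rw [hmap]; exact hcast)
    rw [hmap] at h
    calc ∫ ω, (X₁ ω : ℝ) ∂μ = ∫ n : ℕ, (n : ℝ) ∂(poissonMeasure l₁) := h.symm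
      _ = (l₁ : ℝ) := poisson_integral_id l₁ hint1''
  have hI2 : ∫ ω, ((X₁ ω : ℝ))^2 ∂μ = (l₁ : ℝ) + (l₁ : ℝ)^2 := by
    have h := integral_map (μ := μ) hX1m0.aemeasurable (f := fun n : ℕ => ((n : ℝ))^2)
      (by rw [hmap]; exact hcastsq)
    rw [hmap] at h
    calc ∫ ω, ((X₁ ω : ℝ))^2 ∂μ = ∫ n : ℕ, ((n : ℝ))^2 ∂(poissonMeasure l₁) := h.symm
      _ = (l₁ : ℝ) + (l₁ : ℝ)^2 := poisson_integral_sq l₁ hint1'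
  constructor
  · rw [hI1, hI2]
  -- second part
  · set Y : Ω → ℝ := fun ω => g (X₁ ω) with hY
    have hYmeas : @Measurable Ω ℝ m0 _ Y := (measurable_from_top).comp hX1m0
    have hYint : Integrable Y μ := (integrable_condExp).congr hcond1
    have hYsqint : Integrable (fun ω => Y ω ^ 2) μ := by
      have h2 : Integrable (fun ω => Y ω + Y ω ^ 2) μ := (integrable_condExp).congr hcond2
      exact (h2.sub hYint).congr (Filter.Eventually.of_forall fun ω => by
        simp only [Pi.sub_apply]; ring)
    have hX2sm : AEStronglyMeasurable[m0] (fun ω => (X₂ ω : ℝ)) μ := by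
      have hsq : AEStronglyMeasurable[m0] (fun ω => ((X₂ ω : ℝ))^2) μ := hint2.aestronglyMeasurable
      have := (Real.continuous_sqrt.comp_aestronglyMeasurable hsq)
      refine this.congr (Filter.Eventually.of_forall fun ω => ?_)
      simp [Real.sqrt_sq (Nat.cast_nonneg (X₂ ω))]
    have hX2int : Integrable (fun ω => (X₂ ω : ℝ)) μ := by
      refine Integrable.mono' (g := fun ω => ((X₂ ω : ℝ))^2 + 1)
        (hint2.add (integrable_const 1)) hX2sm ?_
      filter_upwards with ω
      have h0 : (0:ℝ) ≤ (X₂ ω : ℝ) := Nat.cast_nonneg _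
      rw [Real.norm_eq_abs, abs_of_nonneg h0]
      nlinarith [sq_nonneg ((X₂ ω : ℝ) - 1)]
    have hEX2 : ∫ ω, (X₂ ω : ℝ) ∂μ = ∫ ω, Y ω ∂μ := by
      calc ∫ ω, (X₂ ω : ℝ) ∂μ = ∫ ω, (μ[(fun ω => (X₂ ω : ℝ)) | m1]) ω ∂μ :=
            (integral_condExp hm1).symm
        _ = ∫ ω, Y ω ∂μ := integral_congr_ae hcond1
    have hEX2sq : ∫ ω, ((X₂ ω : ℝ))^2 ∂μ = ∫ ω, Y ω ∂μ + ∫ ω, Y ω ^ 2 ∂μ := by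
      calc ∫ ω, ((X₂ ω : ℝ))^2 ∂μ = ∫ ω, (μ[(fun ω => ((X₂ ω : ℝ))^2) | m1]) ω ∂μ :=
            (integral_condExp hm1).symm
        _ = ∫ ω, (Y ω + Y ω ^ 2) ∂μ := integral_congr_ae hcond2
        _ = ∫ ω, Y ω ∂μ + ∫ ω, Y ω ^ 2 ∂μ := integral_add hYint hYsqint
    set m : ℝ := ∫ ω, Y ω ∂μ with hm
    have ha : Integrable (fun ω => Y ω ^ 2 - (2*m) * Y ω) μ := by
      exact hYsqint.sub (hYint.const_mul (2*m))
    have hvint : Integrable (fun ω => (Y ω - m)^2) μ := by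
      refine ((ha.add (integrable_const (m^2))).congr
        (Filter.Eventually.of_forall fun ω => ?_))
      simp only [Pi.add_apply]
      ring
    have hvcalc : ∫ ω, (Y ω - m)^2 ∂μ = ∫ ω, Y ω ^ 2 ∂μ - m^2 := by
      have heq : (fun ω => (Y ω - m)^2) = fun ω => (Y ω ^ 2 - (2*m) * Y ω) + m^2 := by
        funext ω; ring
      rw [heq, integral_add ha (integrable_const (m^2)),
        integral_sub hYsqint (hYint.const_mul (2*m)), integral_const_mul, integral_const]
      simp only [measure_univ, ENNReal.toReal_one, smul_eq_mul, one_mul, ← hm, probReal_univ]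
      ring
    have hvpos : 0 < ∫ ω, (Y ω - m)^2 ∂μ := by
      rcases (integral_nonneg (f := fun ω => (Y ω - m)^2) (fun ω => sq_nonneg _)).lt_or_eq with h | h
      · exact h
      · exfalso
        have hzero : (fun ω => (Y ω - m)^2) =ᵐ[μ] 0 :=
          (integral_eq_zero_iff_of_nonneg (fun ω => sq_nonneg _) hvint).mp h.symm
        refine hnonconst ⟨m, ?_⟩
        filter_upwards [hzero] with ω hω
        have : (Y ω - m)^2 = 0 := hω
        have := pow_eq_zero_iff (n := 2) (by norm_num) |>.mp this
        simpa [Y, sub_eq_zero] using this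
    have hY2gt : m ^ 2 < ∫ ω, Y ω ^ 2 ∂μ := by linarith [hvcalc ▸ hvpos]
    rw [hEX2, hEX2sq]
    linarith
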